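/- Let λ, μ : ℝ≥0 → ℝ≥0 be continuous, fix s ≥ 0, and define A(s,t) = ∫_s^t (λ + μ)(u) du, p₀₁(s,t) = 1 - e^{-A(s,t)}(1 + ∫_s^t e^{A(s,u)} λ(u) du), and p₁₁(s,t) = e^{-A(s,t)}(1 + ∫_s^t e^{A(s,u)} μ(u) du). Then for all t ≥ s, 0 ≤ p₀₁(s,t) ≤ 1 and 0 ≤ p₁₁(s,t) ≤ 1. -/

import Mathlib

open intervalIntegral

theorem stmt13 (lam mu : ℝ → ℝ) (hlam : Continuous lam) (hmu : Continuous mu)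
    (hlam0 : ∀ t, 0 ≤ lam t) (hmu0 : ∀ t, 0 ≤ mu t)
    (s : ℝ) (hs : 0 ≤ s)
    (A : ℝ → ℝ) (hA : ∀ t, A t = ∫ u in s..t, (lam u + mu u))
    (p01 p11 : ℝ → ℝ)
    (hp01 : ∀ t, p01 t = 1 - Real.exp (-(A t)) * (1 + ∫ u in s..t, Real.exp (A u) * lam u))
    (hp11 : ∀ t, p11 t = Real.exp (-(A t)) * (1 + ∫ u in s..t, Real.exp (A u) * mu u)) :
    ∀ t, s ≤ t → (0 ≤ p01 t ∧ p01 t ≤ 1) ∧ (0 ≤ p11 t ∧ p11 t ≤ 1) := by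
  have hcf : Continuous (fun u => lam u + mu u) := hlam.add hmu
  have hAeq : A = fun t => ∫ u in s..t, (lam u + mu u) := funext hA
  have hAder : ∀ u, HasDerivAt A (lam u + mu u) u := by
    intro u
    rw [hAeq]
    exact intervalIntegral.integral_hasDerivAt_right (hcf.intervalIntegrable s u)
      (hcf.stronglyMeasurableAtFilter _ _) hcf.continuousAt
  have hAcont : Continuous A := by
    rw [continuous_iff_continuousAt]
    exact fun u => (hAder u).continuousAt
  have hAs : A s = 0 := by rw [hA s, intervalIntegral.integral_same]
  have hEcont : Continuous fun u => Real.exp (A u) := Real.continuous_exp.comp hAcont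
  intro t hst
  have hkey : (∫ u in s..t, Real.exp (A u) * (lam u + mu u)) = Real.exp (A t) - 1 := by
    have := intervalIntegral.integral_eq_sub_of_hasDerivAt
      (f := fun u => Real.exp (A u)) (f' := fun u => Real.exp (A u) * (lam u + mu u))
      (fun u _ => (hAder u).exp) ((hEcont.mul hcf).intervalIntegrable s t)
    simpa [hAs] using this
  have hsplit : (∫ u in s..t, Real.exp (A u) * (lam u + mu u)) =
      (∫ u in s..t, Real.exp (A u) * lam u) + (∫ u in s..t, Real.exp (A u) * mu u) := by
    rw [← intervalIntegral.integral_add (f := fun u => Real.exp (A u) * lam u)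
      (g := fun u => Real.exp (A u) * mu u) ((hEcont.mul hlam).intervalIntegrable s t)
      ((hEcont.mul hmu).intervalIntegrable s t)]
    congr 1; funext u; ring
  set IL := ∫ u in s..t, Real.exp (A u) * lam u with hIL
  set IM := ∫ u in s..t, Real.exp (A u) * mu u with hIM
  have hIL0 : 0 ≤ IL := intervalIntegral.integral_nonneg hst
    (fun u _ => mul_nonneg (Real.exp_pos _).le (hlam0 u))
  have hIM0 : 0 ≤ IM := intervalIntegral.integral_nonneg hst
    (fun u _ => mul_nonneg (Real.exp_pos _).le (hmu0 u))
  have hsum : IL + IM = Real.exp (A t) - 1 := by rw [← hsplit, hkey]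
  have hILle : 1 + IL ≤ Real.exp (A t) := by linarith
  have hIMle : 1 + IM ≤ Real.exp (A t) := by linarith
  have hE : (0:ℝ) < Real.exp (-(A t)) := Real.exp_pos _
  have hEmul : Real.exp (-(A t)) * Real.exp (A t) = 1 := by
    rw [← Real.exp_add]; simp
  rw [hp01 t, hp11 t, ← hIL, ← hIM]
  refine ⟨⟨?_, ?_⟩, ?_, ?_⟩
  · have : Real.exp (-(A t)) * (1 + IL) ≤ Real.exp (-(A t)) * Real.exp (A t) :=
      mul_le_mul_of_nonneg_left hILle hE.le
    rw [hEmul] at this; linarith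
  · have : 0 ≤ Real.exp (-(A t)) * (1 + IL) := mul_nonneg hE.le (by linarith)
    linarith
  · exact mul_nonneg hE.le (by linarith)
  · have : Real.exp (-(A t)) * (1 + IM) ≤ Real.exp (-(A t)) * Real.exp (A t) :=
      mul_le_mul_of_nonneg_left hIMle hE.le
    rw [hEmul] at this; linarith
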